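/- arXiv:0902.2725 — 6 statements merged into one kernel-verified Lean document; each statement's English description precedes it below -/
import Mathlib

section
/- Let n ≥ 0, θ ∈ ℝ, and a₀, a₁, …, a_{2n+1} ∈ ℂ with a₀ ≠ 0, and let z₁, …, z_{2n+1} ∈ ℂ be the roots (with multiplicity) of the numerator, i.e. a₀z^{2n+1} + a₁z^{2n} + … + a_{2n+1} = a₀·∏_{k=1}^{2n+1}(z − z_k) for all z ∈ ℂ. Set α = θ + 2·arg(a₀). Then for every z ∈ ℂ such that 1 + conj(z_k)·z ≠ 0 for all k, one has e^{iθ}·(a₀z^{2n+1} + a₁z^{2n} + … + a_{2n+1}) / (−conj(a_{2n+1})z^{2n+1} + conj(a_{2n})z^{2n} − … + conj(a₀)) = e^{iα}·∏_{k=1}^{2n+1} (z − z_k)/(1 + conj(z_k)·z), where the denominator on the left is the polynomial whose coefficient of z^j is (−1)^j·conj(a_j) for j = 0, …, 2n+1 (indexing a_j as the coefficient of z^{2n+1−j} in the numerator). -/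
theorem stmt_1 (n : ℕ) (θ : ℝ) (a : Fin (2 * n + 2) → ℂ) (ha : a 0 ≠ 0)
    (z : Fin (2 * n + 1) → ℂ)
    (hroots : ∀ w : ℂ,
      ∑ j : Fin (2 * n + 2), a j * w ^ (2 * n + 1 - (j : ℕ)) = a 0 * ∏ k, (w - z k))
    (α : ℝ) (hα : α = θ + 2 * Complex.arg (a 0)) :
    ∀ w : ℂ, (∀ k, 1 + (starRingEnd ℂ) (z k) * w ≠ 0) →
      Complex.exp (θ * Complex.I) *
            (∑ j : Fin (2 * n + 2), a j * w ^ (2 * n + 1 - (j : ℕ))) /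
          (∑ j : Fin (2 * n + 2), (-1 : ℂ) ^ (j : ℕ) * (starRingEnd ℂ) (a j) * w ^ (j : ℕ)) =
        Complex.exp (α * Complex.I) *
          ∏ k, (w - z k) / (1 + (starRingEnd ℂ) (z k) * w) := by
  -- reversed polynomial identity
  have key : ∀ v : ℂ, ∑ j : Fin (2 * n + 2), a j * v ^ (j : ℕ)
      = a 0 * ∏ k : Fin (2 * n + 1), (1 - z k * v) := by
    intro v
    rcases eq_or_ne v 0 with hv | hv
    · subst hv
      rw [Finset.sum_eq_single (0 : Fin (2 * n + 2))]
      · simp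
      · intro j _ hj
        have : (j : ℕ) ≠ 0 := by
          intro h; apply hj; exact Fin.ext h
        simp [zero_pow this]
      · simp
    · have h := hroots v⁻¹
      have h2 : v ^ (2 * n + 1) * (∑ j : Fin (2 * n + 2), a j * (v⁻¹) ^ (2 * n + 1 - (j : ℕ)))
          = v ^ (2 * n + 1) * (a 0 * ∏ k, (v⁻¹ - z k)) := by rw [h]
      have hL : v ^ (2 * n + 1) * (∑ j : Fin (2 * n + 2), a j * (v⁻¹) ^ (2 * n + 1 - (j : ℕ)))
          = ∑ j : Fin (2 * n + 2), a j * v ^ (j : ℕ) := by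
        rw [Finset.mul_sum]
        apply Finset.sum_congr rfl
        intro j _
        have hj : (j : ℕ) ≤ 2 * n + 1 := by omega
        have hvp : v ^ (2 * n + 1) = v ^ (j : ℕ) * v ^ (2 * n + 1 - (j : ℕ)) := by
          rw [← pow_add]; congr 1; omega
        rw [hvp]
        calc v ^ (j : ℕ) * v ^ (2 * n + 1 - (j : ℕ)) * (a j * (v⁻¹) ^ (2 * n + 1 - (j : ℕ)))
            = a j * v ^ (j : ℕ) * (v ^ (2 * n + 1 - (j : ℕ)) * (v⁻¹) ^ (2 * n + 1 - (j : ℕ))) := by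
              ring
          _ = a j * v ^ (j : ℕ) := by
              rw [← mul_pow, mul_inv_cancel₀ hv, one_pow, mul_one]
      have hR : v ^ (2 * n + 1) * (a 0 * ∏ k : Fin (2 * n + 1), (v⁻¹ - z k))
          = a 0 * ∏ k : Fin (2 * n + 1), (1 - z k * v) := by
        have : ∏ k : Fin (2 * n + 1), (1 - z k * v)
            = ∏ k : Fin (2 * n + 1), (v * (v⁻¹ - z k)) := by
          apply Finset.prod_congr rfl
          intro k _
          field_simp
        rw [this, Finset.prod_mul_distrib, Finset.prod_const, Finset.card_univ, Fintype.card_fin]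
        ring
      rw [← hL, h2, hR]
  intro w hw
  -- denominator identity
  have hden : (∑ j : Fin (2 * n + 2), (-1 : ℂ) ^ (j : ℕ) * (starRingEnd ℂ) (a j) * w ^ (j : ℕ))
      = (starRingEnd ℂ) (a 0) * ∏ k, (1 + (starRingEnd ℂ) (z k) * w) := by
    have h1 : ∀ j : Fin (2 * n + 2), (-1 : ℂ) ^ (j : ℕ) * (starRingEnd ℂ) (a j) * w ^ (j : ℕ)
        = (starRingEnd ℂ) (a j * (-(starRingEnd ℂ) w) ^ (j : ℕ)) := by
      intro j
      simp only [map_mul, map_pow, map_neg, Complex.conj_conj]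
      ring
    calc (∑ j : Fin (2 * n + 2), (-1 : ℂ) ^ (j : ℕ) * (starRingEnd ℂ) (a j) * w ^ (j : ℕ))
        = (starRingEnd ℂ) (∑ j : Fin (2 * n + 2), a j * (-(starRingEnd ℂ) w) ^ (j : ℕ)) := by
          rw [map_sum]; exact Finset.sum_congr rfl fun j _ => h1 j
      _ = (starRingEnd ℂ) (a 0 * ∏ k : Fin (2 * n + 1), (1 - z k * (-(starRingEnd ℂ) w))) := by
          rw [key]
      _ = (starRingEnd ℂ) (a 0) * ∏ k, (1 + (starRingEnd ℂ) (z k) * w) := by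
          rw [map_mul, map_prod]
          congr 1
          apply Finset.prod_congr rfl
          intro k _
          simp only [map_sub, map_one, map_mul, map_neg, Complex.conj_conj]
          ring
  -- phase identity
  have hphase : Complex.exp (α * Complex.I)
      = Complex.exp (θ * Complex.I) * (a 0 / (starRingEnd ℂ) (a 0)) := by
    have habs : ((‖a 0‖ : ℝ) : ℂ) * Complex.exp (Complex.arg (a 0) * Complex.I) = a 0 :=
      Complex.norm_mul_exp_arg_mul_I (a 0)
    have hconj : (starRingEnd ℂ) (a 0)
        = ((‖a 0‖ : ℝ) : ℂ) * Complex.exp (-(Complex.arg (a 0) : ℂ) * Complex.I) := by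
      conv_lhs => rw [← habs]
      rw [map_mul, Complex.conj_ofReal]
      congr 1
      rw [← Complex.exp_conj]
      congr 1
      rw [map_mul, Complex.conj_ofReal, Complex.conj_I]
      ring
    have habs0 : ((‖a 0‖ : ℝ) : ℂ) ≠ 0 := by
      simpa using (norm_ne_zero_iff.mpr ha)
    have hratio : a 0 / (starRingEnd ℂ) (a 0)
        = Complex.exp (2 * (Complex.arg (a 0) : ℂ) * Complex.I) := by
      rw [hconj]
      nth_rewrite 1 [← habs]
      rw [mul_div_mul_left _ _ habs0, ← Complex.exp_sub]
      congr 1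
      ring
    rw [hα]
    push_cast
    rw [add_mul, Complex.exp_add, hratio]
  have hprodne : (∏ k : Fin (2 * n + 1), (1 + (starRingEnd ℂ) (z k) * w)) ≠ 0 :=
    Finset.prod_ne_zero_iff.2 fun k _ => hw k
  have hca : (starRingEnd ℂ) (a 0) ≠ 0 := by simpa using ha
  rw [hroots w, hden, hphase, Finset.prod_div_distrib]
  field_simp
end

section
/- Let n ≥ 0, α ∈ ℝ, z₁, …, z_{2n+1} ∈ ℂ, and define F(z) = e^{iα}·∏_{k=1}^{2n+1} (z − z_k)/(1 + conj(z_k)·z). Then for every z ∈ ℂ with z ≠ 0 such that all factors occurring on both sides are defined and nonzero (i.e. 1 + conj(z_k)·z ≠ 0, z ≠ z_k, and conj(z) ≠ conj(z_k) for all k), one has F(−1/conj(z)) = −1/conj(F(z)). -/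
theorem stmt_3 (n : ℕ) (α : ℝ) (zs : Fin (2 * n + 1) → ℂ) (F : ℂ → ℂ)
    (hF : ∀ z : ℂ, F z = Complex.exp (α * Complex.I) *
      ∏ k, (z - zs k) / (1 + (starRingEnd ℂ) (zs k) * z)) :
    ∀ z : ℂ, z ≠ 0 →
      (∀ k, 1 + (starRingEnd ℂ) (zs k) * z ≠ 0) →
      (∀ k, z ≠ zs k) →
      (∀ k, (starRingEnd ℂ) z ≠ (starRingEnd ℂ) (zs k)) →
      F (-1 / (starRingEnd ℂ) z) = -1 / (starRingEnd ℂ) (F z) := by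
  intro z hz0 h1 h2 h3
  rw [hF, hF]
  have hcz : (starRingEnd ℂ) z ≠ 0 := by
    simpa using hz0
  have key : ∀ k, (-1 / (starRingEnd ℂ) z - zs k) /
      (1 + (starRingEnd ℂ) (zs k) * (-1 / (starRingEnd ℂ) z)) =
      -((starRingEnd ℂ) ((z - zs k) / (1 + (starRingEnd ℂ) (zs k) * z)))⁻¹ := by
    intro k
    have d1 : (starRingEnd ℂ) (1 + (starRingEnd ℂ) (zs k) * z) ≠ 0 := by
      intro h
      exact h1 k (by simpa using congrArg (starRingEnd ℂ) h)
    have d3 : (starRingEnd ℂ) z - (starRingEnd ℂ) (zs k) ≠ 0 := sub_ne_zero.2 (h3 k)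
    rw [map_div₀]
    simp only [map_add, map_mul, map_sub, map_one, Complex.conj_conj] at d1 ⊢
    have hnum : -1 / (starRingEnd ℂ) z - zs k =
        -(1 + zs k * (starRingEnd ℂ) z) / (starRingEnd ℂ) z := by
      field_simp
      ring
    have hden : 1 + (starRingEnd ℂ) (zs k) * (-1 / (starRingEnd ℂ) z) =
        ((starRingEnd ℂ) z - (starRingEnd ℂ) (zs k)) / (starRingEnd ℂ) z := by
      field_simp
      ring
    rw [inv_div, hnum, hden, div_div_div_cancel_right₀ hcz, neg_div]
  simp only [key]
  have hodd : Odd (2 * n + 1) := ⟨n, by ring⟩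
  have lhs : (∏ k : Fin (2 * n + 1),
      -((starRingEnd ℂ) ((z - zs k) / (1 + (starRingEnd ℂ) (zs k) * z)))⁻¹) =
      -(∏ k : Fin (2 * n + 1),
        (starRingEnd ℂ) ((z - zs k) / (1 + (starRingEnd ℂ) (zs k) * z)))⁻¹ := by
    rw [Finset.prod_congr rfl (fun k _ => (neg_one_mul
        (((starRingEnd ℂ) ((z - zs k) / (1 + (starRingEnd ℂ) (zs k) * z)))⁻¹)).symm),
      Finset.prod_mul_distrib, Finset.prod_const, Finset.card_univ, Fintype.card_fin,
      hodd.neg_one_pow, Finset.prod_inv_distrib, neg_one_mul]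
  rw [lhs, map_mul, map_prod]
  have hexp : (starRingEnd ℂ) (Complex.exp (α * Complex.I)) =
      (Complex.exp (α * Complex.I))⁻¹ := by
    rw [← Complex.exp_conj, ← Complex.exp_neg]
    congr 1
    simp [Complex.conj_I]
  rw [hexp]
  have hexp0 : Complex.exp (α * Complex.I) ≠ 0 := Complex.exp_ne_zero _
  field_simp
end

section
/- Let r > 0, θ ∈ ℝ, z₀ = r·e^{iθ}, and G(z) = (z − z₀)/(1 + conj(z₀)·z). Then the complex derivative of G at the fixed point i·e^{iθ} equals (1 − r² − 2ri)/(1 + r²); in particular its absolute value is 1 and its real part is (1 − r²)/(1 + r²). -/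
theorem stmt_5 (r θ : ℝ) (hr : 0 < r) (z₀ : ℂ)
    (hz₀ : z₀ = (r : ℂ) * Complex.exp (θ * Complex.I)) (G : ℂ → ℂ)
    (hG : ∀ z : ℂ, G z = (z - z₀) / (1 + (starRingEnd ℂ) z₀ * z)) :
    deriv G (Complex.I * Complex.exp (θ * Complex.I)) =
      (1 - (r : ℂ) ^ 2 - 2 * (r : ℂ) * Complex.I) / (1 + (r : ℂ) ^ 2) ∧
    ‖deriv G (Complex.I * Complex.exp (θ * Complex.I))‖ = 1 ∧
    (deriv G (Complex.I * Complex.exp (θ * Complex.I))).re = (1 - r ^ 2) / (1 + r ^ 2) := by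
  have hGf : G = fun z => (z - z₀) / (1 + (starRingEnd ℂ) z₀ * z) := funext hG
  set p : ℂ := Complex.I * Complex.exp (θ * Complex.I) with hp
  have hcp : (starRingEnd ℂ) z₀ * p = (r : ℂ) * Complex.I := by
    rw [hz₀, hp]
    simp only [map_mul, Complex.conj_ofReal, ← Complex.exp_conj, map_mul,
      Complex.conj_ofReal, Complex.conj_I]
    rw [show (θ:ℂ) * -Complex.I = -(θ * Complex.I) by ring]
    rw [mul_comm Complex.I (Complex.exp _), mul_assoc, ← mul_assoc (Complex.exp _),
      ← Complex.exp_add]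
    simp
  have hcz : (starRingEnd ℂ) z₀ * z₀ = (r : ℂ) ^ 2 := by
    rw [hz₀]
    simp only [map_mul, Complex.conj_ofReal, ← Complex.exp_conj, map_mul,
      Complex.conj_ofReal, Complex.conj_I]
    rw [show (θ:ℂ) * -Complex.I = -(θ * Complex.I) by ring]
    rw [mul_mul_mul_comm, ← Complex.exp_add, neg_add_cancel, Complex.exp_zero, mul_one, sq]
  have hden : (1 : ℂ) + (starRingEnd ℂ) z₀ * p ≠ 0 := by
    rw [hcp]
    intro h
    have := congrArg Complex.re h
    simp at this
  have hD : HasDerivAt G ((1 + (starRingEnd ℂ) z₀ * z₀) / (1 + (starRingEnd ℂ) z₀ * p) ^ 2) p := by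
    rw [hGf]
    have h1 : HasDerivAt (fun z : ℂ => z - z₀) 1 p := (hasDerivAt_id p).sub_const z₀
    have h2 : HasDerivAt (fun z : ℂ => 1 + (starRingEnd ℂ) z₀ * z) ((starRingEnd ℂ) z₀) p := by
      simpa using (hasDerivAt_id p).const_mul ((starRingEnd ℂ) z₀) |>.const_add 1
    have := h1.div h2 hden
    exact this.congr_deriv (by ring)
  have h1r2 : (1 : ℂ) + (r : ℂ) ^ 2 ≠ 0 := by
    intro h
    have := congrArg Complex.re h
    simp [← Complex.ofReal_pow] at this
    nlinarith
  have hdval : deriv G p = (1 - (r : ℂ) ^ 2 - 2 * (r : ℂ) * Complex.I) / (1 + (r : ℂ) ^ 2) := by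
    rw [hcp] at hden
    rw [hD.deriv, hcz, hcp]
    rw [div_eq_div_iff (pow_ne_zero 2 hden) h1r2]
    ring_nf
    simp only [Complex.I_sq, show Complex.I ^ 3 = -Complex.I by rw [pow_succ, Complex.I_sq]; ring]
    ring
  refine ⟨hdval, ?_, ?_⟩
  · rw [hdval, norm_div]
    set w : ℂ := 1 - (r : ℂ) ^ 2 - 2 * (r : ℂ) * Complex.I with hw
    have h1 : Complex.normSq w = (1 + r ^ 2) ^ 2 := by
      simp [hw, Complex.normSq_apply, ← Complex.ofReal_pow]
      ring
    have h2 := Complex.sq_norm w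
    have hnum : ‖w‖ = 1 + r ^ 2 := by
      nlinarith [norm_nonneg w, sq_nonneg (‖w‖ - (1 + r ^ 2))]
    have hden2 : ‖(1 + (r : ℂ) ^ 2)‖ = 1 + r ^ 2 := by
      rw [show (1 + (r:ℂ)^2) = ((1 + r^2 : ℝ) : ℂ) by push_cast; ring,
        Complex.norm_real, Real.norm_eq_abs, abs_of_pos (by nlinarith)]
    rw [hnum, hden2, div_self (by nlinarith)]
  · rw [hdval, show (1 + (r:ℂ)^2) = ((1 + r^2 : ℝ) : ℂ) by push_cast; ring,
      Complex.div_ofReal_re]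
    simp [← Complex.ofReal_pow]
end

section
/- Let θ ∈ ℝ, p ≥ 0, m ≥ 0, and z₁, …, z_m ∈ ℂ with z_k ≠ 0 for all k, and define F(z) = e^{iθ}·z^{2p+1}·∏_{k=1}^{m} (z² − z_k²)/(1 − conj(z_k)²·z²). Then for every z ∈ ℂ with z ≠ 0 such that all factors on both sides are defined and nonzero (i.e. 1 − conj(z_k)²·z² ≠ 0, z² ≠ z_k², and conj(z²) ≠ conj(z_k²) for all k), one has F(−1/conj(z)) = −1/conj(F(z)). -/
theorem stmt_11 (θ : ℝ) (p m : ℕ) (zs : Fin m → ℂ) (hzs : ∀ k, zs k ≠ 0) (F : ℂ → ℂ)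
    (hF : ∀ z : ℂ, F z = Complex.exp (θ * Complex.I) * z ^ (2 * p + 1) *
      ∏ k, (z ^ 2 - zs k ^ 2) / (1 - ((starRingEnd ℂ) (zs k)) ^ 2 * z ^ 2)) :
    ∀ z : ℂ, z ≠ 0 →
      (∀ k, 1 - ((starRingEnd ℂ) (zs k)) ^ 2 * z ^ 2 ≠ 0) →
      (∀ k, z ^ 2 ≠ zs k ^ 2) →
      (∀ k, (starRingEnd ℂ) (z ^ 2) ≠ (starRingEnd ℂ) (zs k ^ 2)) →
      F (-1 / (starRingEnd ℂ) z) = -1 / (starRingEnd ℂ) (F z) := by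
  intro z hz h1 h2 h3
  set c : ℂ := (starRingEnd ℂ) z with hc
  have hcz : c ≠ 0 := by
    simp [hc, hz]
  set w : ℂ := -1 / c with hw
  -- conjugate of F z
  have h1' : ∀ k, 1 - (zs k) ^ 2 * c ^ 2 ≠ 0 := by
    intro k hk
    apply h1 k
    have := congrArg (starRingEnd ℂ) hk
    simpa [map_sub, map_mul, map_pow, hc, mul_comm] using this
  have h3' : ∀ k, c ^ 2 - ((starRingEnd ℂ) (zs k)) ^ 2 ≠ 0 := by
    intro k
    rw [sub_ne_zero]
    have := h3 k
    simpa [map_pow, hc] using this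
  have hconjF : (starRingEnd ℂ) (F z) =
      Complex.exp (-(θ * Complex.I)) * c ^ (2 * p + 1) *
      ∏ k, (c ^ 2 - ((starRingEnd ℂ) (zs k)) ^ 2) / (1 - (zs k) ^ 2 * c ^ 2) := by
    rw [hF z, map_mul, map_mul, map_prod, ← Complex.exp_conj]
    congr 1
    · congr 2
      · simp [map_mul, Complex.conj_ofReal, Complex.conj_I]
      · rw [map_pow]
    · apply Finset.prod_congr rfl
      intro k _
      rw [map_div₀, map_sub, map_sub, map_pow, map_pow, map_mul, map_pow, map_one]
      simp [hc, mul_comm]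
  have hconjFne : (starRingEnd ℂ) (F z) ≠ 0 := by
    rw [hconjF]
    apply mul_ne_zero
    apply mul_ne_zero (Complex.exp_ne_zero _) (pow_ne_zero _ hcz)
    rw [Finset.prod_ne_zero_iff]
    intro k _
    exact div_ne_zero (h3' k) (h1' k)
  rw [hF w, eq_div_iff hconjFne, hconjF]
  have hden : ∀ k, 1 - ((starRingEnd ℂ) (zs k)) ^ 2 * w ^ 2 ≠ 0 := by
    intro k
    have hrw : 1 - ((starRingEnd ℂ) (zs k)) ^ 2 * w ^ 2
        = (c ^ 2 - ((starRingEnd ℂ) (zs k)) ^ 2) / c ^ 2 := by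
      rw [hw]; field_simp
    rw [hrw]
    exact div_ne_zero (h3' k) (pow_ne_zero _ hcz)
  -- rearrange
  have key : (Complex.exp (θ * Complex.I) * w ^ (2 * p + 1) *
      ∏ k, (w ^ 2 - zs k ^ 2) / (1 - ((starRingEnd ℂ) (zs k)) ^ 2 * w ^ 2)) *
      (Complex.exp (-(θ * Complex.I)) * c ^ (2 * p + 1) *
      ∏ k, (c ^ 2 - ((starRingEnd ℂ) (zs k)) ^ 2) / (1 - (zs k) ^ 2 * c ^ 2))
      = (Complex.exp (θ * Complex.I) * Complex.exp (-(θ * Complex.I))) *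
        (w * c) ^ (2 * p + 1) *
        ∏ k, ((w ^ 2 - zs k ^ 2) / (1 - ((starRingEnd ℂ) (zs k)) ^ 2 * w ^ 2) *
          ((c ^ 2 - ((starRingEnd ℂ) (zs k)) ^ 2) / (1 - (zs k) ^ 2 * c ^ 2))) := by
    rw [Finset.prod_mul_distrib, mul_pow]
    ring
  rw [key]
  have hexp : Complex.exp (θ * Complex.I) * Complex.exp (-(θ * Complex.I)) = 1 := by
    rw [← Complex.exp_add]; simp
  have hwc : w * c = -1 := by
    rw [hw]; field_simp
  have hprod : ∀ k ∈ Finset.univ (α := Fin m),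
      (w ^ 2 - zs k ^ 2) / (1 - ((starRingEnd ℂ) (zs k)) ^ 2 * w ^ 2) *
        ((c ^ 2 - ((starRingEnd ℂ) (zs k)) ^ 2) / (1 - (zs k) ^ 2 * c ^ 2)) = 1 := by
    intro k _
    have hd := hden k
    have hd2 := h1' k
    rw [div_mul_div_comm, div_eq_one_iff_eq (mul_ne_zero hd hd2)]
    rw [hw] at *
    field_simp
  rw [Finset.prod_congr rfl hprod, hexp, hwc, Finset.prod_const_one]
  have : Odd (2 * p + 1) := ⟨p, by ring⟩
  simp [this.neg_one_pow]
end

section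
/- Let θ ∈ ℝ, p ≥ 0, m ≥ 0 with p + m ≥ 1, and z₁, …, z_m ∈ ℂ with 0 < |z_k| < 1 for all k, and define F(z) = e^{iθ}·z^{2p+1}·∏_{k=1}^{m} (z² − z_k²)/(1 − conj(z_k)²·z²). Then for every z ∈ ℂ with |z| < 1, the sequence of iterates F^{∘n}(z) converges to 0 as n → ∞; moreover, the convergence F^{∘n} → 0 is uniform on every compact subset of the open unit disk. -/
private lemma key_id (a w : ℂ) :
    Complex.normSq (1 - (starRingEnd ℂ) a * w) - Complex.normSq (w - a)
      = (1 - Complex.normSq a) * (1 - Complex.normSq w) := by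
  simp [Complex.normSq_apply, Complex.sub_re, Complex.sub_im, Complex.mul_re,
    Complex.mul_im, Complex.one_re, Complex.one_im]
  ring

private lemma denom_ne (a w : ℂ) (ha : ‖a‖ < 1) (hw : ‖w‖ < 1) :
    1 - (starRingEnd ℂ) a * w ≠ 0 := by
  intro h
  have h1 : (starRingEnd ℂ) a * w = 1 := by linear_combination -h
  have h2 := congrArg (fun x : ℂ => ‖x‖) h1
  rw [norm_mul, Complex.norm_conj, norm_one] at h2
  nlinarith [norm_nonneg a, norm_nonneg w]

private lemma abs_le_abs_of_sq (x y : ℂ) (h : Complex.normSq x ≤ Complex.normSq y) :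
    ‖x‖ ≤ ‖y‖ := by
  rw [Complex.norm_def, Complex.norm_def]
  exact Real.sqrt_le_sqrt h

private lemma blaschke_le_one (a w : ℂ) (ha : ‖a‖ < 1) (hw : ‖w‖ < 1) :
    ‖(w - a) / (1 - (starRingEnd ℂ) a * w)‖ ≤ 1 := by
  have hne := denom_ne a w ha hw
  have hDpos : 0 < ‖1 - (starRingEnd ℂ) a * w‖ := by
    simpa [norm_pos_iff] using hne
  rw [norm_div, div_le_one hDpos]
  apply abs_le_abs_of_sq
  have := key_id a w
  have h1 : Complex.normSq a < 1 := by
    rw [← Complex.sq_norm]; nlinarith [norm_nonneg a]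
  have h2 : Complex.normSq w < 1 := by
    rw [← Complex.sq_norm]; nlinarith [norm_nonneg w]
  nlinarith

private lemma blaschke_bound (a w : ℂ) (ρ : ℝ) (ha : ‖a‖ < 1)
    (hρ0 : 0 ≤ ρ) (hρ : ρ < 1) (hw : ‖w‖ ≤ ρ) :
    ‖(w - a) / (1 - (starRingEnd ℂ) a * w)‖
      ≤ Real.sqrt (1 - (1 - (‖a‖)^2) * (1 - ρ^2) / 4) := by
  have hw1 : ‖w‖ < 1 := lt_of_le_of_lt hw hρ
  have hne := denom_ne a w ha hw1
  have hDpos : 0 < ‖1 - (starRingEnd ℂ) a * w‖ := by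
    simpa [norm_pos_iff] using hne
  rw [norm_div, div_le_iff₀ hDpos]
  set A := ‖a‖ with hA
  set W := ‖w‖ with hW
  set D := ‖1 - (starRingEnd ℂ) a * w‖ with hD
  set E := ‖w - a‖ with hE
  have hA0 : 0 ≤ A := norm_nonneg a
  have hW0 : 0 ≤ W := norm_nonneg w
  have hE0 : 0 ≤ E := norm_nonneg _
  have hid : D^2 - E^2 = (1 - A^2) * (1 - W^2) := by
    rw [hA, hW, hD, hE, Complex.sq_norm, Complex.sq_norm, Complex.sq_norm, Complex.sq_norm]
    exact key_id a w
  have harg : 0 ≤ 1 - (1 - A^2) * (1 - ρ^2) / 4 := by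
    have h6 : (1 - A^2) * (1 - ρ^2) ≤ 1 * 1 :=
      mul_le_mul (by nlinarith) (by nlinarith) (by nlinarith) (by norm_num)
    nlinarith
  have hD2 : D ≤ 2 := by
    have h3 : D ≤ ‖(1:ℂ)‖ + ‖(starRingEnd ℂ) a * w‖ := by
      rw [hD]; exact norm_sub_le _ _
    rw [norm_one, norm_mul, Complex.norm_conj, ← hA, ← hW] at h3
    nlinarith
  have key : E^2 ≤ (1 - (1 - A^2) * (1 - ρ^2) / 4) * D^2 := by
    have h1 : (0:ℝ) ≤ 1 - A^2 := by nlinarith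
    have h2 : W^2 ≤ ρ^2 := by nlinarith
    have h4 : (0:ℝ) ≤ 1 - ρ^2 := by nlinarith
    have h5 : (0:ℝ) ≤ 4 - D^2 := by nlinarith [norm_nonneg (1 - (starRingEnd ℂ) a * w)]
    nlinarith [mul_nonneg h1 (sub_nonneg.mpr h2), mul_nonneg (mul_nonneg h1 h4) h5]
  calc E = Real.sqrt (E^2) := (Real.sqrt_sq hE0).symm
    _ ≤ Real.sqrt ((1 - (1 - A^2) * (1 - ρ^2) / 4) * D^2) := Real.sqrt_le_sqrt key
    _ = Real.sqrt (1 - (1 - A^2) * (1 - ρ^2) / 4) * D := by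
        rw [Real.sqrt_mul harg, Real.sqrt_sq hDpos.le]

theorem stmt_16 (θ : ℝ) (p m : ℕ) (hpm : 1 ≤ p + m) (zs : Fin m → ℂ)
    (hzs : ∀ k, 0 < ‖zs k‖ ∧ ‖zs k‖ < 1) (F : ℂ → ℂ)
    (hF : ∀ z : ℂ, F z = Complex.exp (θ * Complex.I) * z ^ (2 * p + 1) *
      ∏ k, (z ^ 2 - zs k ^ 2) / (1 - ((starRingEnd ℂ) (zs k)) ^ 2 * z ^ 2)) :
    (∀ z : ℂ, ‖z‖ < 1 →
      Filter.Tendsto (fun n : ℕ => F^[n] z) Filter.atTop (nhds 0)) ∧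
    ∀ K : Set ℂ, IsCompact K → K ⊆ Metric.ball (0 : ℂ) 1 →
      TendstoUniformlyOn (fun (n : ℕ) (z : ℂ) => F^[n] z) (fun _ => 0) Filter.atTop K := by
  -- rewrite of |F z|
  have habsF : ∀ z : ℂ, ‖F z‖ = ‖z‖ ^ (2 * p + 1) *
      ∏ k, ‖(z ^ 2 - zs k ^ 2) / (1 - (starRingEnd ℂ) (zs k ^ 2) * z ^ 2)‖ := by
    intro z
    rw [hF z, norm_mul, norm_mul, Complex.norm_exp_ofReal_mul_I, one_mul, norm_pow, norm_prod]
    congr 1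
    refine Finset.prod_congr rfl fun k _ => ?_
    rw [map_pow]
  have habs_a : ∀ k : Fin m, ‖zs k ^ 2‖ < 1 := by
    intro k
    rw [norm_pow]
    have := (hzs k).2
    nlinarith [norm_nonneg (zs k)]
  -- the master contraction lemma
  have main : ∀ r : ℝ, 0 ≤ r → r < 1 → ∃ c : ℝ, 0 ≤ c ∧ c < 1 ∧
      ∀ z : ℂ, ‖z‖ ≤ r → ‖F z‖ ≤ c * ‖z‖ := by
    intro r hr0 hr1
    have habs_w : ∀ z : ℂ, ‖z‖ ≤ r → ‖z ^ 2‖ ≤ r ^ 2 := by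
      intro z hz
      rw [norm_pow]
      exact pow_le_pow_left₀ (norm_nonneg z) hz 2
    have hr20 : (0:ℝ) ≤ r ^ 2 := by positivity
    have hr21 : r ^ 2 < 1 := by nlinarith
    have hfac_le_one : ∀ z : ℂ, ‖z‖ ≤ r → ∀ k : Fin m,
        ‖(z ^ 2 - zs k ^ 2) / (1 - (starRingEnd ℂ) (zs k ^ 2) * z ^ 2)‖ ≤ 1 := by
      intro z hz k
      exact blaschke_le_one _ _ (habs_a k) (lt_of_le_of_lt (habs_w z hz) hr21)
    have hprod_le_one : ∀ z : ℂ, ‖z‖ ≤ r →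
        (∏ k, ‖(z ^ 2 - zs k ^ 2) / (1 - (starRingEnd ℂ) (zs k ^ 2) * z ^ 2)‖) ≤ 1 := by
      intro z hz
      exact Finset.prod_le_one (fun k _ => norm_nonneg _) (fun k _ => hfac_le_one z hz k)
    have hprod_nonneg : ∀ z : ℂ,
        (0:ℝ) ≤ ∏ k, ‖(z ^ 2 - zs k ^ 2) / (1 - (starRingEnd ℂ) (zs k ^ 2) * z ^ 2)‖ :=
      fun z => Finset.prod_nonneg (fun k _ => norm_nonneg _)
    rcases Nat.eq_zero_or_pos p with hp | hp
    · -- p = 0, so m ≥ 1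
      have hm : 0 < m := by omega
      set k0 : Fin m := ⟨0, hm⟩
      set A := ‖zs k0 ^ 2‖ with hAdef
      have hA1 : A < 1 := habs_a k0
      have hA0 : 0 ≤ A := norm_nonneg _
      refine ⟨Real.sqrt (1 - (1 - A^2) * (1 - (r^2)^2) / 4), Real.sqrt_nonneg _, ?_, ?_⟩
      · rw [Real.sqrt_lt' one_pos]
        have ha : (0:ℝ) < 1 - A^2 := by nlinarith
        have hb : (0:ℝ) < 1 - (r^2)^2 := by nlinarith
        nlinarith [mul_pos ha hb]
      · intro z hz
        rw [habsF z]
        have hfk0 : ‖(z ^ 2 - zs k0 ^ 2) / (1 - (starRingEnd ℂ) (zs k0 ^ 2) * z ^ 2)‖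
            ≤ Real.sqrt (1 - (1 - A^2) * (1 - (r^2)^2) / 4) :=
          blaschke_bound _ _ (r^2) hA1 hr20 hr21 (habs_w z hz)
        have hsplit := Finset.mul_prod_erase Finset.univ
          (fun k => ‖(z ^ 2 - zs k ^ 2) / (1 - (starRingEnd ℂ) (zs k ^ 2) * z ^ 2)‖)
          (Finset.mem_univ k0)
        have herase : (∏ k ∈ Finset.univ.erase k0,
            ‖(z ^ 2 - zs k ^ 2) / (1 - (starRingEnd ℂ) (zs k ^ 2) * z ^ 2)‖) ≤ 1 :=
          Finset.prod_le_one (fun k _ => norm_nonneg _)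
            (fun k _ => hfac_le_one z hz k)
        have herase0 : (0:ℝ) ≤ ∏ k ∈ Finset.univ.erase k0,
            ‖(z ^ 2 - zs k ^ 2) / (1 - (starRingEnd ℂ) (zs k ^ 2) * z ^ 2)‖ :=
          Finset.prod_nonneg (fun k _ => norm_nonneg _)
        have hprod : (∏ k, ‖(z ^ 2 - zs k ^ 2) / (1 - (starRingEnd ℂ) (zs k ^ 2) * z ^ 2)‖)
            ≤ Real.sqrt (1 - (1 - A^2) * (1 - (r^2)^2) / 4) := by
          rw [← hsplit]
          calc _ ≤ Real.sqrt (1 - (1 - A^2) * (1 - (r^2)^2) / 4) * 1 := by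
                apply mul_le_mul hfk0 herase herase0 (Real.sqrt_nonneg _)
            _ = _ := mul_one _
        subst hp
        rw [show 2 * 0 + 1 = 1 by norm_num, pow_one]
        calc ‖z‖ * ∏ k, ‖(z ^ 2 - zs k ^ 2) / (1 - (starRingEnd ℂ) (zs k ^ 2) * z ^ 2)‖
            ≤ ‖z‖ * Real.sqrt (1 - (1 - A^2) * (1 - (r^2)^2) / 4) :=
              mul_le_mul_of_nonneg_left hprod (norm_nonneg z)
          _ = Real.sqrt (1 - (1 - A^2) * (1 - (r^2)^2) / 4) * ‖z‖ := mul_comm _ _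
    · -- p ≥ 1
      refine ⟨r ^ 2, hr20, hr21, ?_⟩
      intro z hz
      rw [habsF z]
      have h1 : ‖z‖ ^ (2 * p + 1) ≤ r ^ 2 * ‖z‖ := by
        have h2 : ‖z‖ ^ (2 * p + 1) = ‖z‖ ^ (2 * p) * ‖z‖ := by ring
        rw [h2]
        have h3 : ‖z‖ ^ (2 * p) ≤ r ^ (2 * p) :=
          pow_le_pow_left₀ (norm_nonneg z) hz _
        have h4 : r ^ (2 * p) ≤ r ^ 2 := pow_le_pow_of_le_one hr0 hr1.le (by omega)
        exact mul_le_mul (h3.trans h4) le_rfl (norm_nonneg z) hr20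
      calc ‖z‖ ^ (2 * p + 1) *
            ∏ k, ‖(z ^ 2 - zs k ^ 2) / (1 - (starRingEnd ℂ) (zs k ^ 2) * z ^ 2)‖
          ≤ ‖z‖ ^ (2 * p + 1) * 1 :=
            mul_le_mul_of_nonneg_left (hprod_le_one z hz) (by positivity)
        _ = ‖z‖ ^ (2 * p + 1) := mul_one _
        _ ≤ r ^ 2 * ‖z‖ := h1
  -- iteration bound
  have iter : ∀ r c : ℝ, 0 ≤ c → c < 1 →
      (∀ z : ℂ, ‖z‖ ≤ r → ‖F z‖ ≤ c * ‖z‖) →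
      ∀ z : ℂ, ‖z‖ ≤ r → ∀ n : ℕ, ‖F^[n] z‖ ≤ c ^ n * ‖z‖ := by
    intro r c hc0 hc1 hb z hz n
    induction n with
    | zero => simp
    | succ n ih =>
      rw [Function.iterate_succ_apply']
      have hcn1 : c ^ n ≤ 1 := pow_le_one₀ hc0 hc1.le
      have h1 : ‖F^[n] z‖ ≤ r :=
        le_trans ih (by nlinarith [norm_nonneg z])
      calc ‖F (F^[n] z)‖ ≤ c * ‖F^[n] z‖ := hb _ h1
        _ ≤ c * (c ^ n * ‖z‖) := mul_le_mul_of_nonneg_left ih hc0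
        _ = c ^ (n + 1) * ‖z‖ := by ring
  constructor
  · -- pointwise
    intro z hz
    obtain ⟨c, hc0, hc1, hb⟩ := main (‖z‖) (norm_nonneg z) hz
    rw [tendsto_zero_iff_norm_tendsto_zero]
    have hlim : Filter.Tendsto (fun n : ℕ => c ^ n * ‖z‖) Filter.atTop (nhds 0) := by
      simpa using (tendsto_pow_atTop_nhds_zero_of_lt_one hc0 hc1).mul_const (‖z‖)
    refine squeeze_zero (fun n => norm_nonneg _) (fun n => ?_) hlim
    simpa using iter (‖z‖) c hc0 hc1 hb z le_rfl n
  · -- uniform on compacts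
    intro K hK hK1
    rcases K.eq_empty_or_nonempty with hKe | hKne
    · subst hKe
      exact tendstoUniformlyOn_empty
    obtain ⟨z0, hz0K, hz0max⟩ := hK.exists_isMaxOn hKne continuous_norm.continuousOn
    have hr1 : ‖z0‖ < 1 := by
      have := hK1 hz0K
      rwa [Metric.mem_ball, dist_zero_right] at this
    obtain ⟨c, hc0, hc1, hb⟩ := main (‖z0‖) (norm_nonneg z0) hr1
    rw [Metric.tendstoUniformlyOn_iff]
    intro ε hε
    have hlim : Filter.Tendsto (fun n : ℕ => c ^ n * ‖z0‖) Filter.atTop (nhds 0) := by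
      simpa using (tendsto_pow_atTop_nhds_zero_of_lt_one hc0 hc1).mul_const (‖z0‖)
    have hev : ∀ᶠ n : ℕ in Filter.atTop, c ^ n * ‖z0‖ < ε :=
      hlim.eventually (gt_mem_nhds hε)
    filter_upwards [hev] with n hn z hzK
    have hzr : ‖z‖ ≤ ‖z0‖ := hz0max hzK
    have := iter (‖z0‖) c hc0 hc1 hb z hzr n
    have hcz : c ^ n * ‖z‖ ≤ c ^ n * ‖z0‖ :=
      mul_le_mul_of_nonneg_left hzr (pow_nonneg hc0 n)
    rw [dist_comm, dist_zero_right]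
    calc ‖F^[n] z‖ ≤ c ^ n * ‖z‖ := this
      _ ≤ c ^ n * ‖z0‖ := hcz
      _ < ε := hn
end

section
/- Let (z_k)_{k ∈ ℕ} be a sequence of complex numbers with 0 < |z_k| < 1 for all k, such that ∑_{k} (1 − |z_k|) < ∞. Then for every z ∈ ℂ with |z| < 1, the infinite product ∏_{k} (conj(z_k)/|z_k|) · (z_k − z)/(1 − conj(z_k)·z) is multipliable (i.e. the partial products converge in ℂ). -/
open Complex Filter

theorem stmt_17 (zs : ℕ → ℂ)
    (hzs : ∀ k, 0 < ‖zs k‖ ∧ ‖zs k‖ < 1)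
    (hsum : Summable (fun k => 1 - ‖zs k‖)) :
    ∀ z : ℂ, ‖z‖ < 1 →
      Multipliable (fun k => ((starRingEnd ℂ) (zs k) / (‖zs k‖ : ℂ)) *
        ((zs k - z) / (1 - (starRingEnd ℂ) (zs k) * z))) := by
  intro z hz
  set f : ℕ → ℂ := fun k => ((starRingEnd ℂ) (zs k) / (‖zs k‖ : ℂ)) *
        ((zs k - z) / (1 - (starRingEnd ℂ) (zs k) * z)) with hfdef
  have hz0 : (0:ℝ) ≤ ‖z‖ := norm_nonneg z
  have hzpos : 0 < 1 - ‖z‖ := by linarith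
  have hden : ∀ k, (1 - (starRingEnd ℂ) (zs k) * z) ≠ 0 := by
    intro k h
    have h1 : ‖(starRingEnd ℂ) (zs k) * z‖ < 1 := by
      rw [norm_mul, Complex.norm_conj]
      calc ‖zs k‖ * ‖z‖ ≤ 1 * ‖z‖ :=
            mul_le_mul_of_nonneg_right (hzs k).2.le hz0
        _ < 1 := by simpa using hz
    have h2 : (starRingEnd ℂ) (zs k) * z = 1 := (sub_eq_zero.mp h).symm
    rw [h2] at h1; simp at h1
  by_cases hzz : ∃ k, zs k = z
  · obtain ⟨k, hk⟩ := hzz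
    refine ⟨0, ?_⟩
    have hk0 : f k = 0 := by simp [hfdef, hk]
    have hev : (fun s : Finset ℕ => ∏ i ∈ s, f i) =ᶠ[atTop] fun _ => 0 := by
      filter_upwards [Filter.eventually_ge_atTop {k}] with s hs
      exact Finset.prod_eq_zero (hs (Finset.mem_singleton_self k)) hk0
    exact Tendsto.congr' hev.symm tendsto_const_nhds
  · push_neg at hzz
    have hne : ∀ k, f k ≠ 0 := by
      intro k
      have h1 : (starRingEnd ℂ) (zs k) ≠ 0 := by
        simp only [ne_eq, map_eq_zero]
        intro h
        have := (hzs k).1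
        rw [h] at this; simpa using this
      have h2 : ((‖zs k‖ : ℝ) : ℂ) ≠ 0 := by
        simp only [ne_eq, Complex.ofReal_eq_zero]
        exact ne_of_gt (hzs k).1
      have h3 : zs k - z ≠ 0 := sub_ne_zero.mpr (hzz k)
      exact mul_ne_zero (div_ne_zero h1 h2) (div_ne_zero h3 (hden k))
    set C : ℝ := (1 + ‖z‖) / (1 - ‖z‖) with hC
    have hC0 : 0 ≤ C := div_nonneg (by linarith) hzpos.le
    have key : ∀ k, ‖f k - 1‖ ≤ C * (1 - ‖zs k‖) := by
      intro k
      set a := zs k with ha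
      set r : ℝ := ‖a‖ with hr
      have hr0 : (0:ℝ) < r := (hzs k).1
      have hr1 : r < 1 := (hzs k).2
      have hrC : ((r:ℝ):ℂ) ≠ 0 := by simpa using ne_of_gt hr0
      have hconj : (starRingEnd ℂ) a * a = ((r:ℝ):ℂ)^2 := by
        rw [mul_comm, Complex.mul_conj, Complex.normSq_eq_norm_sq]; push_cast; ring
      have heq : f k - 1 = (((r:ℝ):ℂ) - 1) * (((r:ℝ):ℂ) + (starRingEnd ℂ) a * z) /
          (((r:ℝ):ℂ) * (1 - (starRingEnd ℂ) a * z)) := by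
        have hD : ((r:ℝ):ℂ) * (1 - (starRingEnd ℂ) a * z) ≠ 0 :=
          mul_ne_zero hrC (hden k)
        have hnum : (starRingEnd ℂ) a * (a - z) - ((r:ℝ):ℂ) * (1 - (starRingEnd ℂ) a * z)
            = (((r:ℝ):ℂ) - 1) * (((r:ℝ):ℂ) + (starRingEnd ℂ) a * z) := by
          linear_combination hconj
        rw [hfdef]
        simp only
        rw [div_mul_div_comm, div_sub_one hD, hnum]
      rw [heq, norm_div, norm_mul, norm_mul]
      have e1 : ‖((r:ℝ):ℂ) - 1‖ = 1 - r := by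
        rw [show ((r:ℝ):ℂ) - 1 = ((r - 1 : ℝ) : ℂ) by push_cast; ring,
          Complex.norm_real, Real.norm_eq_abs, abs_of_nonpos (by linarith)]
        ring
      have e2 : ‖((r:ℝ):ℂ) + (starRingEnd ℂ) a * z‖ ≤ r * (1 + ‖z‖) := by
        calc ‖((r:ℝ):ℂ) + (starRingEnd ℂ) a * z‖ ≤ ‖((r:ℝ):ℂ)‖ + ‖(starRingEnd ℂ) a * z‖ :=
              norm_add_le _ _
          _ = r + r * ‖z‖ := by
              simp [norm_mul, Complex.norm_conj, ← hr, abs_of_pos hr0]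
          _ = r * (1 + ‖z‖) := by ring
      have e3 : 1 - ‖z‖ ≤ ‖1 - (starRingEnd ℂ) a * z‖ := by
        calc 1 - ‖z‖ ≤ 1 - r * ‖z‖ := by nlinarith
          _ ≤ ‖(1:ℂ)‖ - ‖(starRingEnd ℂ) a * z‖ := by
              simp [norm_mul, Complex.norm_conj, ← hr]
          _ ≤ ‖1 - (starRingEnd ℂ) a * z‖ := norm_sub_norm_le _ _
      have e4 : ‖((r:ℝ):ℂ)‖ = r := by
        simp [Complex.norm_real, Real.norm_eq_abs, abs_of_pos hr0]
      rw [e1, e4]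
      have hdenpos : 0 < r * ‖1 - (starRingEnd ℂ) a * z‖ := by
        apply mul_pos hr0
        simpa [norm_pos_iff] using hden k
      rw [div_le_iff₀ hdenpos]
      calc (1 - r) * ‖((r:ℝ):ℂ) + (starRingEnd ℂ) a * z‖
          ≤ (1 - r) * (r * (1 + ‖z‖)) :=
            mul_le_mul_of_nonneg_left e2 (by linarith)
        _ = (C * (1 - r)) * (r * (1 - ‖z‖)) := by
            rw [hC]; field_simp
        _ ≤ (C * (1 - r)) * (r * ‖1 - (starRingEnd ℂ) a * z‖) := by
            apply mul_le_mul_of_nonneg_left (mul_le_mul_of_nonneg_left e3 hr0.le)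
            exact mul_nonneg hC0 (by linarith)
        _ = C * (1 - r) * (r * ‖1 - (starRingEnd ℂ) a * z‖) := by ring
    have hsum2 : Summable fun k => ‖f k - 1‖ :=
      Summable.of_nonneg_of_le (fun k => norm_nonneg _) key (hsum.mul_left C)
    have htend : Tendsto (fun k => ‖f k - 1‖) atTop (nhds 0) := hsum2.tendsto_atTop_zero
    have hev2 : ∀ᶠ k in atTop, ‖f k - 1‖ ≤ 1/2 :=
      htend.eventually (ge_mem_nhds (by norm_num : (0:ℝ) < 1/2))
    have hlog : Summable fun k => Complex.log (f k) := by
      apply Summable.of_norm_bounded_eventually_nat (g := fun k => (3/2) * ‖f k - 1‖)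
        (hsum2.mul_left (3/2))
      filter_upwards [hev2] with k hk
      have : Complex.log (f k) = Complex.log (1 + (f k - 1)) := by ring_nf
      rw [this]
      exact Complex.norm_log_one_add_half_le_self hk
    exact Complex.multipliable_of_summable_log hlog
end
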